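/- No expansion rule can derive B*(a*) unless it is entailed: if A ∪ T ⊭ B*(a*), then after any application of the ⊓-, ∃₁-, ∃₂-, or ⊑-rule to A, the resulting ABox A'' still satisfies A'' ∪ T ⊭ B*(a*); in particular B*(a*) ∉ A''. -/
import Mathlib


/-! Basic syntax and semantics of the description logic EL_⊥. -/

/-- EL_⊥ concepts over concept names `C` and role names `R`. -/
inductive ELConcept (C R : Type) : Type
  | top  : ELConcept C R
  | bot  : ELConcept C R
  | atom : C → ELConcept C R
  | conj : ELConcept C R → ELConcept C R → ELConcept C R
  | ex   : R → ELConcept C R → ELConcept C R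

/-- A general concept inclusion (GCI) `C ⊑ D`. -/
abbrev GCI (C R : Type) := ELConcept C R × ELConcept C R

/-- A TBox is a set of GCIs. -/
abbrev TBox (C R : Type) := Set (GCI C R)

/-- ABox assertions: concept assertions `C(a)` and role assertions `r(a,b)`. -/
inductive Assertion (C R Ind : Type) : Type
  | concept : ELConcept C R → Ind → Assertion C R Ind
  | role    : R → Ind → Ind → Assertion C R Ind

/-- An ABox is a set of assertions. -/
abbrev ABox (C R Ind : Type) := Set (Assertion C R Ind)

/-- An interpretation with domain `δ`, interpreting concept names, role names
and individual names. -/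
structure Interp (C R Ind δ : Type) where
  atomI : C → Set δ
  roleI : R → Set (δ × δ)
  indI  : Ind → δ

/-- Semantics of concepts. -/
def Interp.sem {C R Ind δ : Type} (I : Interp C R Ind δ) : ELConcept C R → Set δ
  | .top => Set.univ
  | .bot => ∅
  | .atom A => I.atomI A
  | .conj c d => I.sem c ∩ I.sem d
  | .ex r c => {x | ∃ y, (x, y) ∈ I.roleI r ∧ y ∈ I.sem c}

/-- `I` satisfies a GCI `C ⊑ D` iff `C^I ⊆ D^I`. -/
def Interp.satGCI {C R Ind δ : Type} (I : Interp C R Ind δ) (g : GCI C R) : Prop :=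
  I.sem g.1 ⊆ I.sem g.2

/-- `I` is a model of a TBox. -/
def Interp.modelT {C R Ind δ : Type} (I : Interp C R Ind δ) (T : TBox C R) : Prop :=
  ∀ g ∈ T, I.satGCI g

/-- `I` satisfies an assertion. -/
def Interp.satA {C R Ind δ : Type} (I : Interp C R Ind δ) : Assertion C R Ind → Prop
  | .concept c a => I.indI a ∈ I.sem c
  | .role r a b => (I.indI a, I.indI b) ∈ I.roleI r

/-- `I` is a model of an ABox. -/
def Interp.modelA {C R Ind δ : Type} (I : Interp C R Ind δ) (A : ABox C R Ind) : Prop :=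
  ∀ ax ∈ A, I.satA ax

/-- `I` is a model of the ontology `O = A ∪ T`. -/
def Interp.modelO {C R Ind δ : Type} (I : Interp C R Ind δ) (A : ABox C R Ind)
    (T : TBox C R) : Prop :=
  I.modelA A ∧ I.modelT T

/-- TBox entailment of a GCI: every model of `T` satisfies the GCI. -/
def entailsT {C R : Type} (T : TBox C R) (g : GCI C R) : Prop :=
  ∀ (Ind δ : Type) (I : Interp C R Ind δ), I.modelT T → I.satGCI g

/-- The ontology `A ∪ T` is consistent iff it has a model. -/
def consistentO {C R Ind : Type} (A : ABox C R Ind) (T : TBox C R) : Prop :=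
  ∃ (δ : Type) (I : Interp C R Ind δ), I.modelO A T

/-- Entailment of an assertion from an ontology `A ∪ T`. -/
def entailsO {C R Ind : Type} (A : ABox C R Ind) (T : TBox C R)
    (ax : Assertion C R Ind) : Prop :=
  ∀ (δ : Type) (I : Interp C R Ind δ), I.modelO A T → I.satA ax

/-- Occurrence of a concept name in a concept. -/
def occursName {C R : Type} (B : C) : ELConcept C R → Prop
  | .atom A => A = B
  | .conj c d => occursName B c ∨ occursName B d
  | .ex _ c => occursName B c
  | _ => False

/-- Occurrence of a concept name in a TBox. -/
def occursNameT {C R : Type} (B : C) (T : TBox C R) : Prop :=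
  ∃ g ∈ T, occursName B g.1 ∨ occursName B g.2

/-- A concept is ⊥-free (i.e. an EL concept). -/
def botFree {C R : Type} : ELConcept C R → Prop
  | .bot => False
  | .conj c d => botFree c ∧ botFree d
  | .ex _ c => botFree c
  | _ => True

/-- The top-level conjuncts `At(D)` of a concept `D`: the conjuncts of `D`
if `D` is a conjunction, and `{D}` otherwise. -/
def At {C R : Type} : ELConcept C R → Set (ELConcept C R)
  | .conj c d => At c ∪ At d
  | c => {c}

/-- A concept that is a concept name or `⊤`. -/
def atomicOrTop {C R : Type} (c : ELConcept C R) : Prop :=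
  c = ELConcept.top ∨ ∃ A, c = ELConcept.atom A

/-- A basic concept: a concept name, `⊤`, or `⊥`. -/
def isBasic {C R : Type} (c : ELConcept C R) : Prop :=
  c = ELConcept.top ∨ c = ELConcept.bot ∨ ∃ A, c = ELConcept.atom A

/-- Axioms of a normalized EL_⊥ TBox: `A ⊑ B`, `A₁ ⊓ A₂ ⊑ B`, `∃r.A ⊑ B`,
or `A ⊑ ∃r.B`, with `A, A₁, A₂, B` concept names, `⊤`, or `⊥`. -/
def normalizedAxiom {C R : Type} (g : GCI C R) : Prop :=
  (isBasic g.1 ∧ isBasic g.2) ∨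
  (∃ A1 A2, isBasic A1 ∧ isBasic A2 ∧ g.1 = ELConcept.conj A1 A2 ∧ isBasic g.2) ∨
  (∃ r A, isBasic A ∧ g.1 = ELConcept.ex r A ∧ isBasic g.2) ∨
  (∃ r B, isBasic B ∧ g.2 = ELConcept.ex r B ∧ isBasic g.1)

/-- A normalized TBox. -/
def normalized {C R : Type} (T : TBox C R) : Prop :=
  ∀ g ∈ T, normalizedAxiom g

/-- The left-hand side `L` of a TBox axiom is witnessed at `a` in `A`. -/
def witnessed {C R Ind : Type} (A : ABox C R Ind) (L : ELConcept C R) (a : Ind) : Prop :=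
  Assertion.concept L a ∈ A ∨
  ∃ c d, L = ELConcept.conj c d ∧ Assertion.concept c a ∈ A ∧ Assertion.concept d a ∈ A

/-- An assertion mentions the individual `d`. -/
def Assertion.mentions {C R Ind : Type} (d : Ind) : Assertion C R Ind → Prop
  | .concept _ a => a = d
  | .role _ a b => a = d ∨ b = d

/-- The individual `d` occurs in the ABox `A`. -/
def mentionsA {C R Ind : Type} (d : Ind) (A : ABox C R Ind) : Prop :=
  ∃ ax ∈ A, ax.mentions d

/-- The expansion rules other than the ∃₂-rule: the ⊓-rule, the ∃₁-rule and
the ⊑-rule. -/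
inductive StepCore {C R Ind : Type} (T : TBox C R) : ABox C R Ind → ABox C R Ind → Prop
  | conjRule {A : ABox C R Ind} {D c : ELConcept C R} {a : Ind} :
      Assertion.concept D a ∈ A → c ∈ At D → Assertion.concept c a ∉ A →
      StepCore T A (insert (Assertion.concept c a) A)
  | ex1 {A : ABox C R Ind} {r : R} {a b : Ind} {B : ELConcept C R} :
      Assertion.role r a b ∈ A → Assertion.concept B b ∈ A → atomicOrTop B →
      Assertion.concept (ELConcept.ex r B) a ∉ A →
      StepCore T A (insert (Assertion.concept (ELConcept.ex r B) a) A)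
  | sub {A : ABox C R Ind} {g : GCI C R} {a : Ind} :
      g ∈ T → witnessed A g.1 a → Assertion.concept g.2 a ∉ A →
      StepCore T A (insert (Assertion.concept g.2 a) A)

/-- The ∃₂-rule, parameterized by a guard `good` describing when an existing
individual may be reused as a successor. A fresh individual is introduced
only if no existing individual can be reused. -/
inductive StepEx {C R Ind : Type} (good : ABox C R Ind → Prop) :
    ABox C R Ind → ABox C R Ind → Prop
  | reuse {A : ABox C R Ind} {r : R} {a c : Ind} {E : ELConcept C R} :
      Assertion.concept (ELConcept.ex r E) a ∈ A →
      (¬ ∃ b, Assertion.role r a b ∈ A ∧ Assertion.concept E b ∈ A) →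
      good (insert (Assertion.role r a c) (insert (Assertion.concept E c) A)) →
      StepEx good A (insert (Assertion.role r a c) (insert (Assertion.concept E c) A))
  | fresh {A : ABox C R Ind} {r : R} {a d : Ind} {E : ELConcept C R} :
      Assertion.concept (ELConcept.ex r E) a ∈ A →
      (¬ ∃ b, Assertion.role r a b ∈ A ∧ Assertion.concept E b ∈ A) →
      (¬ ∃ c, good (insert (Assertion.role r a c) (insert (Assertion.concept E c) A))) →
      ¬ mentionsA d A →
      StepEx good A (insert (Assertion.role r a d) (insert (Assertion.concept E d)
        (insert (Assertion.concept ELConcept.top d) A)))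

/-- One application of any expansion rule. -/
def Step {C R Ind : Type} (T : TBox C R) (good : ABox C R Ind → Prop)
    (A A' : ABox C R Ind) : Prop :=
  StepCore T A A' ∨ StepEx good A A'

/-- One application of an expansion rule under the strategy that the ∃₂-rule
is applied only when no other rule is applicable. -/
def StepPr {C R Ind : Type} (T : TBox C R) (good : ABox C R Ind → Prop)
    (A A' : ABox C R Ind) : Prop :=
  StepCore T A A' ∨ ((¬ ∃ B, StepCore T A B) ∧ StepEx good A A')

/-- An ABox is complete if no expansion rule is applicable. -/
def completeA {C R Ind : Type} (T : TBox C R) (good : ABox C R Ind → Prop)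
    (A' : ABox C R Ind) : Prop :=
  ¬ ∃ A'', Step T good A' A''

/-- An ABox is clash-free if it contains no assertion `⊥(a)`. -/
def clashFree {C R Ind : Type} (A' : ABox C R Ind) : Prop :=
  ∀ a, Assertion.concept ELConcept.bot a ∉ A'

/-- The interpretation induced from an ABox: `a^I = a`,
`A^I = {a | A(a) ∈ A'}`, `r^I = {(a,b) | r(a,b) ∈ A'}`. -/
def induced {C R Ind : Type} (A' : ABox C R Ind) : Interp C R Ind Ind where
  atomI := fun B => {a | Assertion.concept (ELConcept.atom B) a ∈ A'}
  roleI := fun r => {p | Assertion.role r p.1 p.2 ∈ A'}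
  indI := id


lemma sem_congr' {C R Ind Ind' δ : Type} (I : Interp C R Ind δ) (J : Interp C R Ind' δ)
    (ha : I.atomI = J.atomI) (hr : I.roleI = J.roleI) :
    ∀ c : ELConcept C R, I.sem c = J.sem c := by
  intro c; induction c with
  | top => rfl
  | bot => rfl
  | atom A => simp [Interp.sem, ha]
  | conj a b iha ihb => simp [Interp.sem, iha, ihb]
  | ex r a ih => simp [Interp.sem, hr, ih]

lemma At_subset' {C R Ind δ : Type} (I : Interp C R Ind δ) :
    ∀ (D c : ELConcept C R), c ∈ At D → I.sem D ⊆ I.sem c := by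
  intro D
  induction D with
  | conj a b iha ihb =>
    intro c hc
    rcases hc with h | h
    · exact fun x hx => iha c h hx.1
    · exact fun x hx => ihb c h hx.2
  | top => intro c hc; cases hc; exact fun x hx => hx
  | bot => intro c hc; cases hc; exact fun x hx => hx
  | atom A => intro c hc; cases hc; exact fun x hx => hx
  | ex r a _ => intro c hc; cases hc; exact fun x hx => hx

/-- No expansion rule can derive `B*(a*)` unless it is entailed:
if `A ∪ T ⊭ B*(a*)`, then after any rule application (with the ∃₂-rule reusing
individuals only when consistent and not entailing `B*(a*)`), the resulting
ABox `A''` still satisfies `A'' ∪ T ⊭ B*(a*)`; in particular `B*(a*) ∉ A''`. -/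
theorem stmt12 {C R Ind : Type} (T : TBox C R) (A A'' : ABox C R Ind)
    (Cc D : ELConcept C R) (Bstar : C) (astar : Ind)
    (hA : A = {Assertion.concept Cc astar})
    (hmem : (D, ELConcept.atom Bstar) ∈ T)
    (hne : ¬ entailsO A T (Assertion.concept (ELConcept.atom Bstar) astar))
    (hstep : Step T
      (fun B => consistentO B T ∧
        ¬ entailsO B T (Assertion.concept (ELConcept.atom Bstar) astar)) A A'') :
    ¬ entailsO A'' T (Assertion.concept (ELConcept.atom Bstar) astar) ∧
      Assertion.concept (ELConcept.atom Bstar) astar ∉ A'' := by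
  classical
  have key : ¬ entailsO A'' T (Assertion.concept (ELConcept.atom Bstar) astar) := by
    rw [entailsO] at hne
    push_neg at hne
    obtain ⟨δ, I, hIm, hns⟩ := hne
    rcases hstep with hcore | hex
    · -- core rules: I is still a model of A''
      intro hent
      apply hns
      refine hent δ I ⟨?_, hIm.2⟩
      cases hcore with
      | conjRule h1 h2 h3 =>
        intro ax hax
        rcases Set.mem_insert_iff.1 hax with rfl | hax
        · exact At_subset' I _ _ h2 (hIm.1 _ h1)
        · exact hIm.1 ax hax
      | ex1 h1 h2 h3 h4 =>
        intro ax hax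
        rcases Set.mem_insert_iff.1 hax with rfl | hax
        · exact ⟨_, hIm.1 _ h1, hIm.1 _ h2⟩
        · exact hIm.1 ax hax
      | sub hg hw h3 =>
        intro ax hax
        rcases Set.mem_insert_iff.1 hax with rfl | hax
        · refine hIm.2 _ hg ?_
          rcases hw with h | ⟨c, d, heq, hc, hd⟩
          · exact hIm.1 _ h
          · rw [heq]; exact ⟨hIm.1 _ hc, hIm.1 _ hd⟩
        · exact hIm.1 ax hax
    · cases hex with
      | reuse h1 h2 hgood => exact hgood.2
      | @fresh r a d E h1 h2 h3 hfresh =>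
        obtain ⟨y, hy1, hy2⟩ := hIm.1 _ h1
        set J : Interp C R Ind δ :=
          ⟨I.atomI, I.roleI, Function.update I.indI d y⟩ with hJ
        have hsem : ∀ c : ELConcept C R, I.sem c = J.sem c :=
          sem_congr' I J rfl rfl
        have had : a ≠ d := by
          rintro rfl
          exact hfresh ⟨_, h1, rfl⟩
        have hastar : astar ≠ d := by
          rintro rfl
          exact hfresh ⟨Assertion.concept Cc astar, by rw [hA]; rfl, by simp [Assertion.mentions]⟩
        have hJa : J.indI a = I.indI a := Function.update_of_ne had _ _
        have hJd : J.indI d = y := show Function.update I.indI d y d = y from Function.update_self _ _ _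
        have hpres : ∀ ax ∈ A, J.satA ax := by
          intro ax hax
          have hm : ¬ ax.mentions d := fun h => hfresh ⟨ax, hax, h⟩
          cases ax with
          | concept c b =>
            have hb : b ≠ d := hm
            show J.indI b ∈ J.sem c
            rw [show J.indI b = I.indI b from Function.update_of_ne hb _ _, ← hsem]
            exact hIm.1 _ hax
          | role r' b b' =>
            have hb : b ≠ d ∧ b' ≠ d := by
              constructor <;> intro h <;> exact hm (by simp [Assertion.mentions, h])
            show (J.indI b, J.indI b') ∈ J.roleI r'
            rw [show J.indI b = I.indI b from Function.update_of_ne hb.1 _ _,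
              show J.indI b' = I.indI b' from Function.update_of_ne hb.2 _ _]
            exact hIm.1 _ hax
        intro hent
        apply hns
        have hJmod : J.modelO (insert (Assertion.role r a d)
            (insert (Assertion.concept E d)
              (insert (Assertion.concept ELConcept.top d) A))) T := by
          constructor
          · intro ax hax
            rcases Set.mem_insert_iff.1 hax with rfl | hax
            · show (J.indI a, J.indI d) ∈ J.roleI r
              rw [hJa, hJd]; exact hy1
            rcases Set.mem_insert_iff.1 hax with rfl | hax
            · show J.indI d ∈ J.sem E
              rw [hJd, ← hsem]; exact hy2
            rcases Set.mem_insert_iff.1 hax with rfl | hax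
            · exact Set.mem_univ _
            · exact hpres ax hax
          · intro g hg
            show J.sem g.1 ⊆ J.sem g.2
            rw [← hsem, ← hsem]
            exact hIm.2 g hg
        have := hent δ J hJmod
        show I.indI astar ∈ I.sem (ELConcept.atom Bstar)
        rw [hsem, show I.indI astar = J.indI astar from
          (Function.update_of_ne hastar _ _).symm]
        exact this
  exact ⟨key, fun hmem' => key (fun δ I hI => hI.1 _ hmem')⟩
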